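/- Let m ≥ 2, f(x) = ax² + bx with a,b ∈ ℤ, 2ax+b > 0 on [1,m], f(m)>m, and α = log(f(m)+1)/log(m+1). If a < 0, then min over x ∈ {1,...,m} of (f(x)+1)/(x+1)^α equals 1 (attained at x = m, since f(m)+1 = (m+1)^α). -/

import Mathlib

lemma key_holder (t F lam : ℝ) (ht0 : 0 < t) (ht1 : t ≤ 1) (hl0 : 0 < lam)
    (hl1 : lam ≤ 1) (hF : 0 < F) :
    (1 - t) + t * (1 + F) ^ lam ≤ (1 + t * F) ^ lam := by
  rcases eq_or_lt_of_le ht1 with h1 | h1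
  · subst h1; simp
  have h1t : 0 < 1 - t := by linarith
  have hS : 0 < 1 + t * F := by nlinarith
  have h1 := Real.geom_mean_le_arith_mean2_weighted (w₁ := lam) (w₂ := 1 - lam)
      (p₁ := (1 - t) / (1 + t * F)) (p₂ := 1 - t) (le_of_lt hl0) (by linarith)
      (div_nonneg h1t.le hS.le) h1t.le (by ring)
  have h2 := Real.geom_mean_le_arith_mean2_weighted (w₁ := lam) (w₂ := 1 - lam)
      (p₁ := t * (1 + F) / (1 + t * F)) (p₂ := t) (le_of_lt hl0) (by linarith)
      (div_nonneg (by positivity) hS.le) ht0.le (by ring)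
  have e1 : ((1 - t) / (1 + t * F)) ^ lam * (1 - t) ^ (1 - lam)
      = (1 - t) / (1 + t * F) ^ lam := by
    rw [Real.div_rpow h1t.le hS.le, div_mul_eq_mul_div, ← Real.rpow_add h1t]
    norm_num
  have e2 : (t * (1 + F) / (1 + t * F)) ^ lam * t ^ (1 - lam)
      = t * (1 + F) ^ lam / (1 + t * F) ^ lam := by
    rw [Real.div_rpow (by positivity) hS.le,
      Real.mul_rpow ht0.le (by positivity), div_mul_eq_mul_div]
    congr 1
    have ht : t ^ lam * t ^ (1 - lam) = t := by
      rw [← Real.rpow_add ht0]; norm_num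
    calc t ^ lam * (1 + F) ^ lam * t ^ (1 - lam)
        = (t ^ lam * t ^ (1 - lam)) * (1 + F) ^ lam := by ring
      _ = t * (1 + F) ^ lam := by rw [ht]
  rw [e1] at h1
  rw [e2] at h2
  have hsum := add_le_add h1 h2
  have hrhs : lam * ((1 - t) / (1 + t * F)) + (1 - lam) * (1 - t)
      + (lam * (t * (1 + F) / (1 + t * F)) + (1 - lam) * t) = 1 := by
    field_simp
    ring
  rw [← add_div] at hsum
  rw [hrhs] at hsum
  have hpos : 0 < (1 + t * F) ^ lam := Real.rpow_pos_of_pos hS lam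
  calc (1 - t) + t * (1 + F) ^ lam
      = ((1 - t) + t * (1 + F) ^ lam) / (1 + t * F) ^ lam * (1 + t * F) ^ lam := by
        field_simp
    _ ≤ 1 * (1 + t * F) ^ lam := by
        apply mul_le_mul_of_nonneg_right hsum hpos.le
    _ = (1 + t * F) ^ lam := one_mul _

theorem quadratic_conversion_min_neg_leading (m : ℕ) (hm : 2 ≤ m) (a b : ℤ)
    (hderiv : ∀ x : ℝ, 1 ≤ x → x ≤ m → 0 < 2 * (a : ℝ) * x + b)
    (hnat : ∀ x : ℕ, x ≤ m → 0 ≤ a * (x : ℤ) ^ 2 + b * x)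
    (hfm : (m : ℤ) < a * (m : ℤ) ^ 2 + b * m)
    (α : ℝ) (hα : α = Real.log ((a * (m : ℤ) ^ 2 + b * m : ℤ) + 1 : ℝ) / Real.log (m + 1))
    (ha : a < 0) :
    IsLeast {y : ℝ | ∃ x : ℕ, 1 ≤ x ∧ x ≤ m ∧
      y = ((a * (x : ℤ) ^ 2 + b * x : ℤ) + 1 : ℝ) / ((x : ℝ) + 1) ^ α} 1 := by
  set Fr : ℝ := ((a * (m : ℤ) ^ 2 + b * m : ℤ) : ℝ) with hFr_def
  have hm1 : (1 : ℝ) ≤ (m : ℝ) := by exact_mod_cast Nat.one_le_of_lt hm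
  have hm2 : (2 : ℝ) ≤ (m : ℝ) := by exact_mod_cast hm
  have hmpos : (0 : ℝ) < (m : ℝ) := by linarith
  have hFrm : (m : ℝ) < Fr := by rw [hFr_def]; push_cast; exact_mod_cast (by push_cast at hfm ⊢; exact hfm : (m:ℤ) < a * (m:ℤ)^2 + b * m)
  have hlogm : 0 < Real.log ((m : ℝ) + 1) := Real.log_pos (by linarith)
  have hlogF : 0 < Real.log (Fr + 1) := Real.log_pos (by linarith)
  have hα0 : 0 < α := by rw [hα]; exact div_pos hlogF hlogm
  have hpowm : ((m : ℝ) + 1) ^ α = Fr + 1 := by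
    rw [hα, Real.rpow_def_of_pos (by linarith : (0:ℝ) < (m:ℝ) + 1)]
    have : Real.log ((m : ℝ) + 1) * (Real.log (Fr + 1) / Real.log ((m : ℝ) + 1))
        = Real.log (Fr + 1) := by field_simp
    rw [this, Real.exp_log (by linarith)]
  constructor
  · refine ⟨m, by omega, le_refl m, ?_⟩
    rw [hpowm, div_self (by linarith : Fr + 1 ≠ 0)]
  · rintro y ⟨x, hx1, hxm, rfl⟩
    set fx : ℝ := ((a * (x : ℤ) ^ 2 + b * x : ℤ) : ℝ) with hfx_def
    have hxr1 : (1 : ℝ) ≤ (x : ℝ) := by exact_mod_cast hx1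
    have hxmr : (x : ℝ) ≤ (m : ℝ) := by exact_mod_cast hxm
    set t : ℝ := (x : ℝ) / (m : ℝ) with ht_def
    have ht0 : 0 < t := div_pos (by linarith) hmpos
    have ht1 : t ≤ 1 := (div_le_one hmpos).mpr hxmr
    set lam : ℝ := Real.log ((m : ℝ) + 1) / Real.log (Fr + 1) with hlam_def
    have hl0 : 0 < lam := div_pos hlogm hlogF
    have hl1 : lam ≤ 1 := by
      rw [hlam_def, div_le_one hlogF]
      exact Real.log_le_log (by linarith) (by linarith)
    have hpowF : (1 + Fr) ^ lam = 1 + (m : ℝ) := by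
      rw [hlam_def, Real.rpow_def_of_pos (by linarith : (0:ℝ) < 1 + Fr)]
      have h1 : Real.log (1 + Fr) = Real.log (Fr + 1) := by ring_nf
      rw [h1]
      have : Real.log (Fr + 1) * (Real.log ((m : ℝ) + 1) / Real.log (Fr + 1))
          = Real.log ((m : ℝ) + 1) := by field_simp
      rw [this, Real.exp_log (by linarith)]
      ring
    have hkey := key_holder t Fr lam ht0 ht1 hl0 hl1 (by linarith)
    rw [hpowF] at hkey
    have htm : t * (m : ℝ) = (x : ℝ) := div_mul_cancel₀ _ (ne_of_gt hmpos)
    have hkey2 : (x : ℝ) + 1 ≤ (1 + t * Fr) ^ lam := by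
      have he : (1 - t) + t * (1 + (m : ℝ)) = (x : ℝ) + 1 := by linear_combination htm
      linarith [hkey, he.ge, he.le]
    have hSpos : (0 : ℝ) < 1 + t * Fr := by nlinarith
    have h2 : ((x : ℝ) + 1) ^ α ≤ ((1 + t * Fr) ^ lam) ^ α :=
      Real.rpow_le_rpow (by positivity) hkey2 hα0.le
    have h3 : ((1 + t * Fr) ^ lam) ^ α = 1 + t * Fr := by
      rw [← Real.rpow_mul hSpos.le]
      have hla : lam * α = 1 := by
        rw [hlam_def, hα]; field_simp
      rw [hla, Real.rpow_one]
    have hfxge : t * Fr ≤ fx := by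
      have hint : (x : ℤ) * (a * (m : ℤ) ^ 2 + b * m) ≤ (m : ℤ) * (a * (x : ℤ) ^ 2 + b * x) := by
        have hx0 : (0 : ℤ) ≤ (-a) * ((x : ℤ) * (m : ℤ) * ((m : ℤ) - (x : ℤ))) := by
          apply mul_nonneg (by linarith)
          apply mul_nonneg (mul_nonneg (by exact_mod_cast Nat.zero_le x) (by exact_mod_cast Nat.zero_le m))
          have : (x : ℤ) ≤ (m : ℤ) := by exact_mod_cast hxm
          linarith
        nlinarith [hx0]
      have hr : (x : ℝ) * Fr ≤ (m : ℝ) * fx := by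
        rw [hFr_def, hfx_def]; push_cast; exact_mod_cast hint
      rw [ht_def, div_mul_eq_mul_div, div_le_iff₀ hmpos]
      nlinarith [hr]
    have hden : (0 : ℝ) < ((x : ℝ) + 1) ^ α := Real.rpow_pos_of_pos (by linarith) α
    have hub : ((x : ℝ) + 1) ^ α ≤ 1 + t * Fr := by rw [← h3]; exact h2
    have final : 1 * (((x : ℝ) + 1) ^ α) ≤ fx + 1 := by rw [one_mul]; linarith
    exact (le_div_iff₀ hden).mpr final
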